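/- Yao et al. sum-of-variances equality: for self-adjoint A, B on a d-dimensional complex Hilbert space, a unit vector Ψ, and an orthonormal basis {Ψ, Ψ₁⊥, …, Ψ_{d−1}⊥} containing Ψ: ΔA² + ΔB² = ±i⟨Ψ,[A,B]Ψ⟩ + Σ_{k=1}^{d−1} |⟨Ψ, (A ± iB)Ψ_k⊥⟩|², where the same sign ± is used throughout. -/

import Mathlib

open Complex

local notation "⟪" x ", " y "⟫" => @inner ℂ _ _ x y

/-- Yao et al. sum-of-variances equality:
ΔA² + ΔB² = ±i⟨Ψ,[A,B]Ψ⟩ + Σ_{k≠0} |⟨Ψ,(A ± iB)Ψₖ⊥⟩|²,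
where {Ψ = b 0, b 1, …, b (d−1)} is an orthonormal basis. -/
theorem yao_sum_of_variances_equality
    {d : ℕ} (hd : 0 < d)
    {E : Type*} [NormedAddCommGroup E] [InnerProductSpace ℂ E] [FiniteDimensional ℂ E]
    (A B : E →ₗ[ℂ] E)
    (hA : ∀ x y : E, ⟪A x, y⟫ = ⟪x, A y⟫)
    (hB : ∀ x y : E, ⟪B x, y⟫ = ⟪x, B y⟫)
    (b : OrthonormalBasis (Fin d) ℂ E)
    (Ψ : E) (hΨ : b ⟨0, hd⟩ = Ψ)
    (s : ℝ) (hs : s = 1 ∨ s = -1) :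
    ((⟪Ψ, A (A Ψ)⟫).re - ((⟪Ψ, A Ψ⟫).re) ^ 2) +
        ((⟪Ψ, B (B Ψ)⟫).re - ((⟪Ψ, B Ψ⟫).re) ^ 2) =
      s * (Complex.I * ⟪Ψ, A (B Ψ) - B (A Ψ)⟫).re +
        ∑ k ∈ Finset.univ.filter (fun k : Fin d => k ≠ ⟨0, hd⟩),
          (‖⟪Ψ, A (b k) + ((s : ℂ) * Complex.I) • B (b k)⟫‖) ^ 2 := by
  have hs2 : s ^ 2 = 1 := by rcases hs with h | h <;> simp [h]
  set t : ℂ := (s : ℂ) * Complex.I with ht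
  have htc : (starRingEnd ℂ) t = -t := by
    simp [ht]
  have htt : (starRingEnd ℂ) t * t = 1 := by
    rw [htc, ht]
    have : ((s : ℂ)) ^ 2 = 1 := by exact_mod_cast congrArg (fun x : ℝ => (x : ℂ)) hs2
    ring_nf
    rw [Complex.I_sq]
    linear_combination this
  set u : E := A Ψ - t • B Ψ with hu
  -- selfadjoint expectations are real
  have hre : ∀ (T : E →ₗ[ℂ] E), (∀ x y : E, ⟪T x, y⟫ = ⟪x, T y⟫) →
      (⟪Ψ, T Ψ⟫ : ℂ) = ((⟪Ψ, T Ψ⟫.re : ℝ) : ℂ) := by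
    intro T hT
    have h1 : (starRingEnd ℂ) ⟪Ψ, T Ψ⟫ = ⟪Ψ, T Ψ⟫ := by
      rw [inner_conj_symm, hT]
    exact (Complex.conj_eq_iff_re.mp h1).symm ▸ rfl
  have hαr := hre A hA
  have hβr := hre B hB
  set α : ℝ := (⟪Ψ, A Ψ⟫ : ℂ).re with hα
  set β : ℝ := (⟪Ψ, B Ψ⟫ : ℂ).re with hβ
  -- each summand equals ⟪u, b k⟫
  have hku : ∀ k : Fin d, ⟪Ψ, A (b k) + t • B (b k)⟫ = ⟪u, b k⟫ := by
    intro k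
    rw [inner_add_right, inner_smul_right, ← hA, ← hB, hu, inner_sub_left,
      inner_smul_left, htc]
    ring
  -- Parseval
  have hpar : ∑ k : Fin d, ⟪u, b k⟫ * ⟪b k, u⟫ = ⟪u, u⟫ := b.sum_inner_mul_inner u u
  have hterm : ∀ k : Fin d, ⟪u, b k⟫ * ⟪b k, u⟫ = ((Complex.normSq ⟪u, b k⟫ : ℝ) : ℂ) := by
    intro k
    rw [← inner_conj_symm (b k) u, Complex.mul_conj]
  have hparR : ∑ k : Fin d, Complex.normSq ⟪u, b k⟫ = (⟪u, u⟫ : ℂ).re := by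
    have := congrArg Complex.re hpar
    rw [Complex.re_sum] at this
    simp only [hterm, Complex.ofReal_re] at this
    exact this
  -- inner u u
  set c : ℂ := ⟪Ψ, A (B Ψ) - B (A Ψ)⟫ with hc
  have huu : (⟪u, u⟫ : ℂ) = ⟪Ψ, A (A Ψ)⟫ + ⟪Ψ, B (B Ψ)⟫ - t * c := by
    have h1 : ⟪A Ψ, A Ψ⟫ = ⟪Ψ, A (A Ψ)⟫ := hA Ψ (A Ψ)
    have h2 : ⟪A Ψ, B Ψ⟫ = ⟪Ψ, A (B Ψ)⟫ := hA Ψ (B Ψ)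
    have h3 : ⟪B Ψ, A Ψ⟫ = ⟪Ψ, B (A Ψ)⟫ := hB Ψ (A Ψ)
    have h4 : ⟪B Ψ, B Ψ⟫ = ⟪Ψ, B (B Ψ)⟫ := hB Ψ (B Ψ)
    simp only [hu, hc, inner_sub_left, inner_sub_right, inner_smul_left,
      inner_smul_right, htc, h1, h2, h3, h4]
    linear_combination (⟪Ψ, B (B Ψ)⟫ : ℂ) * htt - (⟪Ψ, B (B Ψ)⟫ : ℂ) * t * htc
  -- value at k = 0
  have h0 : ⟪u, b ⟨0, hd⟩⟫ = (α : ℂ) + t * (β : ℂ) := by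
    rw [hΨ, hu, inner_sub_left, inner_smul_left, htc, hA, hB, ← hαr, ← hβr]
    ring
  have h0n : Complex.normSq ⟪u, b ⟨0, hd⟩⟫ = α ^ 2 + β ^ 2 := by
    rw [h0, ht, Complex.normSq_apply]
    simp
    ring_nf
    nlinarith [hs2]
  -- split the sum
  have hsplit : ∑ k ∈ Finset.univ.filter (fun k : Fin d => k ≠ ⟨0, hd⟩),
      Complex.normSq ⟪u, b k⟫
      = (⟪u, u⟫ : ℂ).re - (α ^ 2 + β ^ 2) := by
    have herase : Finset.univ.filter (fun k : Fin d => k ≠ ⟨0, hd⟩)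
        = Finset.univ.erase ⟨0, hd⟩ := by
      ext k; simp [Finset.mem_erase, and_comm]
    rw [herase, ← h0n, eq_sub_iff_add_eq,
      Finset.sum_erase_add _ _ (Finset.mem_univ _), hparR]
  -- rewrite the target sum
  have hsum : ∑ k ∈ Finset.univ.filter (fun k : Fin d => k ≠ ⟨0, hd⟩),
      (‖⟪Ψ, A (b k) + ((s : ℂ) * Complex.I) • B (b k)⟫‖) ^ 2
      = (⟪u, u⟫ : ℂ).re - (α ^ 2 + β ^ 2) := by
    rw [← hsplit]
    refine Finset.sum_congr rfl fun k _ => ?_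
    rw [← ht, hku k, Complex.sq_norm]
  rw [hsum, huu]
  have hre_t : (t * c).re = s * (Complex.I * c).re := by
    rw [ht, mul_assoc, Complex.re_ofReal_mul]
  simp only [Complex.sub_re, Complex.add_re, hre_t]
  ring
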